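/- arXiv:1601.00321 — 3 statements merged into one kernel-verified Lean document; each statement's English description precedes it below -/
import Mathlib

section
/- Let A, B be real constants with 0 < B < A, let K be an integer with K ≥ 2, let γ ∈ (0,1), and let f(ρ) = A·ρ^{1−γ} + B·[((1−K)ρ + K)^{1−γ} − ρ^{1−γ}]. Then f is strictly concave on the interval (0,1]. -/
open Real Set

/-- For `0 < B < A`, an integer `K ≥ 2`, `γ ∈ (0,1)`, the function
`f(ρ) = A·ρ^{1−γ} + B·[((1−K)ρ + K)^{1−γ} − ρ^{1−γ}]` is strictly concave on `(0,1]`. -/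
theorem stmt_1 (A B γ : ℝ) (K : ℤ) (hB : 0 < B) (hBA : B < A) (hK : 2 ≤ K)
    (hγ0 : 0 < γ) (hγ1 : γ < 1) :
    StrictConcaveOn ℝ (Set.Ioc (0 : ℝ) 1)
      (fun ρ : ℝ => A * ρ ^ (1 - γ) +
        B * (((1 - (K : ℝ)) * ρ + (K : ℝ)) ^ (1 - γ) - ρ ^ (1 - γ))) := by
  set p : ℝ := 1 - γ with hp
  have hp0 : 0 < p := by simp [hp]; linarith
  have hp1 : p < 1 := by simp [hp]; linarith
  have hK1 : (1 : ℝ) ≤ (K : ℝ) := by exact_mod_cast le_trans (by norm_num) hK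
  have hrpow := strictConcaveOn_rpow hp0 hp1
  have hcpow := concaveOn_rpow hp0.le hp1.le
  -- strict part: ρ ↦ (A - B) * ρ ^ p
  have h1 : StrictConcaveOn ℝ (Set.Ioc (0 : ℝ) 1) (fun ρ : ℝ => (A - B) * ρ ^ p) := by
    refine ⟨convex_Ioc 0 1, fun x hx y hy hxy a b ha hb hab => ?_⟩
    have := hrpow.2 (le_of_lt hx.1 : (0:ℝ) ≤ x) (le_of_lt hy.1 : (0:ℝ) ≤ y) hxy ha hb hab
    simp only [smul_eq_mul] at this ⊢
    nlinarith [this, sub_pos.mpr hBA]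
  -- concave part: ρ ↦ B * ((1 - K) * ρ + K) ^ p
  have h2 : ConcaveOn ℝ (Set.Ioc (0 : ℝ) 1)
      (fun ρ : ℝ => B * ((1 - (K : ℝ)) * ρ + (K : ℝ)) ^ p) := by
    refine ⟨convex_Ioc 0 1, fun x hx y hy a b ha hb hab => ?_⟩
    have hux : (0 : ℝ) ≤ (1 - (K : ℝ)) * x + K := by nlinarith [hx.1, hx.2]
    have huy : (0 : ℝ) ≤ (1 - (K : ℝ)) * y + K := by nlinarith [hy.1, hy.2]
    have := hcpow.2 hux huy ha hb hab
    simp only [smul_eq_mul] at this ⊢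
    have harg : (1 - (K : ℝ)) * (a * x + b * y) + K
        = a * ((1 - (K : ℝ)) * x + K) + b * ((1 - (K : ℝ)) * y + K) := by
      have : a * (K : ℝ) + b * K = K := by
        have : (a + b) * (K : ℝ) = K := by rw [hab, one_mul]
        linarith [this]
      ring_nf
      ring_nf at this
      linarith [this]
    rw [harg]
    nlinarith [this, hB.le]
  have := h1.add_concaveOn h2
  convert this using 1
  · rfl
  funext ρ
  simp only [Pi.add_apply]
  ring_nf
end

section
/- Let A, B be real constants with 0 < B < A, let K be an integer with K ≥ 2, let γ ∈ (0,1), and let f(ρ) = A·ρ^{1−γ} + B·[((1−K)ρ + K)^{1−γ} − ρ^{1−γ}]. If A ≥ K·B, then f is monotone nondecreasing on (0,1]; in particular, f(ρ) ≤ f(1) for every ρ ∈ (0,1], so the optimal MPC cache fraction is ρ* = 1. -/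
open Real Set

lemma stmt3_mono (A B γ : ℝ) (K : ℤ) (hB : 0 < B) (hBA : B < A) (hK : 2 ≤ K)
    (hγ0 : 0 < γ) (hγ1 : γ < 1) (hKB : (K : ℝ) * B ≤ A) :
    MonotoneOn
      (fun ρ : ℝ => A * ρ ^ (1 - γ) +
        B * (((1 - (K : ℝ)) * ρ + (K : ℝ)) ^ (1 - γ) - ρ ^ (1 - γ)))
      (Set.Ioc (0 : ℝ) 1) := by
  have hK1 : (1 : ℝ) ≤ (K : ℝ) := by exact_mod_cast (by omega : (1:ℤ) ≤ K)
  have hu : ∀ x : ℝ, 0 < x → x ≤ 1 → 0 < (1 - (K : ℝ)) * x + K := by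
    intro x hx hx1
    nlinarith
  have hderiv : ∀ x ∈ Set.Ioo (0:ℝ) 1,
      HasDerivAt (fun ρ : ℝ => A * ρ ^ (1 - γ) +
        B * (((1 - (K : ℝ)) * ρ + (K : ℝ)) ^ (1 - γ) - ρ ^ (1 - γ)))
      (A * ((1 - γ) * x ^ (1 - γ - 1)) +
        B * ((1 - γ) * ((1 - (K : ℝ)) * x + K) ^ (1 - γ - 1) * (1 - (K : ℝ))
          - (1 - γ) * x ^ (1 - γ - 1))) x := by
    intro x hx
    have hx0 : x ≠ 0 := ne_of_gt hx.1
    have h1 : HasDerivAt (fun ρ : ℝ => ρ ^ (1 - γ)) ((1 - γ) * x ^ (1 - γ - 1)) x :=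
      Real.hasDerivAt_rpow_const (Or.inl hx0)
    have hux : ((1 - (K : ℝ)) * x + K) ≠ 0 := ne_of_gt (hu x hx.1 hx.2.le)
    have h2 : HasDerivAt (fun ρ : ℝ => (1 - (K : ℝ)) * ρ + K) (1 - (K : ℝ)) x := by
      simpa using ((hasDerivAt_id x).const_mul (1 - (K : ℝ))).add_const (K : ℝ)
    have h3 : HasDerivAt (fun ρ : ℝ => ((1 - (K : ℝ)) * ρ + K) ^ (1 - γ))
        ((1 - γ) * ((1 - (K : ℝ)) * x + K) ^ (1 - γ - 1) * (1 - (K : ℝ))) x := by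
      have := (Real.hasDerivAt_rpow_const (p := 1 - γ) (Or.inl hux)).comp x h2
      simpa [Function.comp_def, mul_comm, mul_assoc] using this
    exact (h1.const_mul A).add ((h3.sub h1).const_mul B)
  have hcont : ContinuousOn (fun ρ : ℝ => A * ρ ^ (1 - γ) +
        B * (((1 - (K : ℝ)) * ρ + (K : ℝ)) ^ (1 - γ) - ρ ^ (1 - γ)))
      (Set.Ioc (0:ℝ) 1) := by
    have hid : ContinuousOn (fun ρ : ℝ => ρ ^ (1 - γ)) (Set.Ioc (0:ℝ) 1) :=
      ContinuousOn.rpow_const continuousOn_id (fun x hx => Or.inl (ne_of_gt hx.1))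
    have hucont : ContinuousOn (fun ρ : ℝ => ((1 - (K : ℝ)) * ρ + K) ^ (1 - γ))
        (Set.Ioc (0:ℝ) 1) :=
      ContinuousOn.rpow_const (by fun_prop)
        (fun x hx => Or.inl (ne_of_gt (hu x hx.1 hx.2)))
    exact (continuousOn_const.mul hid).add
      (continuousOn_const.mul (hucont.sub hid))
  have hint : interior (Set.Ioc (0:ℝ) 1) = Set.Ioo (0:ℝ) 1 := interior_Ioc
  apply monotoneOn_of_deriv_nonneg (convex_Ioc 0 1) hcont
  · rw [hint]
    exact fun x hx => (hderiv x hx).differentiableAt.differentiableWithinAt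
  · rw [hint]
    intro x hx
    rw [(hderiv x hx).deriv]
    have hx0 := hx.1
    have hx1 := hx.2
    have hux : 0 < (1 - (K : ℝ)) * x + K := hu x hx0 hx1.le
    have hxu : x ≤ (1 - (K : ℝ)) * x + K := by nlinarith
    have hle : ((1 - (K : ℝ)) * x + K) ^ (1 - γ - 1) ≤ x ^ (1 - γ - 1) :=
      Real.rpow_le_rpow_of_nonpos hx0 hxu (by linarith)
    have hxp : 0 < x ^ (1 - γ - 1) := Real.rpow_pos_of_pos hx0 _
    have hup : 0 < ((1 - (K : ℝ)) * x + K) ^ (1 - γ - 1) := Real.rpow_pos_of_pos hux _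
    have hc : 0 < 1 - γ := by linarith
    -- key: (A - B) * x^p ≥ B * (K - 1) * u^p
    have hAB : B * ((K : ℝ) - 1) ≤ A - B := by nlinarith
    have key : B * ((K : ℝ) - 1) * (((1 - (K : ℝ)) * x + K) ^ (1 - γ - 1))
        ≤ (A - B) * x ^ (1 - γ - 1) := by
      calc B * ((K : ℝ) - 1) * (((1 - (K : ℝ)) * x + K) ^ (1 - γ - 1))
          ≤ (A - B) * (((1 - (K : ℝ)) * x + K) ^ (1 - γ - 1)) := by
            exact mul_le_mul_of_nonneg_right hAB hup.le
        _ ≤ (A - B) * x ^ (1 - γ - 1) :=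
            mul_le_mul_of_nonneg_left hle (by linarith)
    nlinarith [mul_pos hc hxp]

/-- For `0 < B < A`, an integer `K ≥ 2`, `γ ∈ (0,1)`, and
`f(ρ) = A·ρ^{1−γ} + B·[((1−K)ρ + K)^{1−γ} − ρ^{1−γ}]`: if `A ≥ K·B` then `f` is
monotone nondecreasing on `(0,1]`, and in particular `f(ρ) ≤ f(1)` for every
`ρ ∈ (0,1]` (the optimal MPC cache fraction is `ρ* = 1`). -/
theorem stmt_3 (A B γ : ℝ) (K : ℤ) (hB : 0 < B) (hBA : B < A) (hK : 2 ≤ K)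
    (hγ0 : 0 < γ) (hγ1 : γ < 1) (hKB : (K : ℝ) * B ≤ A) :
    MonotoneOn
      (fun ρ : ℝ => A * ρ ^ (1 - γ) +
        B * (((1 - (K : ℝ)) * ρ + (K : ℝ)) ^ (1 - γ) - ρ ^ (1 - γ)))
      (Set.Ioc (0 : ℝ) 1) ∧
    ∀ ρ ∈ Set.Ioc (0 : ℝ) 1,
      (A * ρ ^ (1 - γ) +
        B * (((1 - (K : ℝ)) * ρ + (K : ℝ)) ^ (1 - γ) - ρ ^ (1 - γ))) ≤
      (A * (1 : ℝ) ^ (1 - γ) +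
        B * (((1 - (K : ℝ)) * 1 + (K : ℝ)) ^ (1 - γ) - (1 : ℝ) ^ (1 - γ))) := by
  have hm := stmt3_mono A B γ K hB hBA hK hγ0 hγ1 hKB
  refine ⟨hm, fun ρ hρ => ?_⟩
  exact hm hρ (Set.mem_Ioc.mpr ⟨zero_lt_one, le_refl 1⟩) hρ.2
end

section
/- Let A, B be real constants with 0 < B < A, let K be an integer with K ≥ 2, let γ ∈ (0,1), and let f(ρ) = A·ρ^{1−γ} + B·[((1−K)ρ + K)^{1−γ} − ρ^{1−γ}]. If moreover A < K·B, then the point ρ* = K / [ ((K−1)/(A/B − 1))^{1/γ} + K − 1 ] lies in the open interval (0,1), satisfies f'(ρ*) = 0 where f'(ρ) = (1−γ)(A−B)·ρ^{−γ} − (1−γ)·B·(K−1)·((1−K)ρ + K)^{−γ}, and maximizes f on (0,1]: f(ρ) ≤ f(ρ*) for every ρ ∈ (0,1]. -/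
open Real Set

private lemma aux1 (a t P Q : ℝ) (ha : 0 < a) (hP : 0 < P) (hQ : 0 < Q)
    (h : t * P < Q) : a * t * Q⁻¹ < a * P⁻¹ := by
  have h5 : t * Q⁻¹ < P⁻¹ := by
    rw [← div_eq_mul_inv, ← one_div, div_lt_div_iff₀ hQ hP]
    linarith
  calc a * t * Q⁻¹ = a * (t * Q⁻¹) := by ring
    _ < a * P⁻¹ := mul_lt_mul_of_pos_left h5 ha

private lemma aux2 (a t P Q : ℝ) (ha : 0 < a) (hP : 0 < P) (hQ : 0 < Q)
    (h : Q < t * P) : a * P⁻¹ < a * t * Q⁻¹ := by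
  have h5 : P⁻¹ < t * Q⁻¹ := by
    rw [← div_eq_mul_inv, ← one_div, div_lt_div_iff₀ hP hQ]
    linarith
  calc a * P⁻¹ < a * (t * Q⁻¹) := mul_lt_mul_of_pos_left h5 ha
    _ = a * t * Q⁻¹ := by ring

set_option maxHeartbeats 1000000 in
/-- For `0 < B < A`, an integer `K ≥ 2`, `γ ∈ (0,1)`, and
`f(ρ) = A·ρ^{1−γ} + B·[((1−K)ρ + K)^{1−γ} − ρ^{1−γ}]`: if `A < K·B`, then
`ρ* = K / [((K−1)/(A/B − 1))^{1/γ} + K − 1]` lies in `(0,1)`, satisfies `f'(ρ*) = 0`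
where `f'(ρ) = (1−γ)(A−B)·ρ^{−γ} − (1−γ)·B·(K−1)·((1−K)ρ + K)^{−γ}`, and maximizes
`f` on `(0,1]`. -/
theorem stmt_4 (A B γ : ℝ) (K : ℤ) (hB : 0 < B) (hBA : B < A) (hK : 2 ≤ K)
    (hγ0 : 0 < γ) (hγ1 : γ < 1) (hKB : A < (K : ℝ) * B) :
    (K : ℝ) / ((((K : ℝ) - 1) / (A / B - 1)) ^ (1 / γ) + (K : ℝ) - 1) ∈
      Set.Ioo (0 : ℝ) 1 ∧
    ((1 - γ) * (A - B) *
        ((K : ℝ) / ((((K : ℝ) - 1) / (A / B - 1)) ^ (1 / γ) + (K : ℝ) - 1)) ^ (-γ) -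
      (1 - γ) * B * ((K : ℝ) - 1) *
        ((1 - (K : ℝ)) *
            ((K : ℝ) / ((((K : ℝ) - 1) / (A / B - 1)) ^ (1 / γ) + (K : ℝ) - 1)) +
          (K : ℝ)) ^ (-γ)) = 0 ∧
    ∀ ρ ∈ Set.Ioc (0 : ℝ) 1,
      (A * ρ ^ (1 - γ) +
        B * (((1 - (K : ℝ)) * ρ + (K : ℝ)) ^ (1 - γ) - ρ ^ (1 - γ))) ≤
      (A * ((K : ℝ) / ((((K : ℝ) - 1) / (A / B - 1)) ^ (1 / γ) + (K : ℝ) - 1)) ^ (1 - γ) +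
        B * (((1 - (K : ℝ)) *
              ((K : ℝ) / ((((K : ℝ) - 1) / (A / B - 1)) ^ (1 / γ) + (K : ℝ) - 1)) +
            (K : ℝ)) ^ (1 - γ) -
          ((K : ℝ) / ((((K : ℝ) - 1) / (A / B - 1)) ^ (1 / γ) + (K : ℝ) - 1)) ^ (1 - γ))) := by
  have hKr : (2:ℝ) ≤ (K:ℝ) := by exact_mod_cast hK
  set Kr : ℝ := (K:ℝ) with hKrdef
  have hK1 : 1 < Kr := by linarith
  have hγ' : 0 < 1 - γ := by linarith
  have hAB : 0 < A - B := by linarith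
  have hd0 : 0 < A / B - 1 := by
    have : 1 < A / B := (one_lt_div hB).2 hBA
    linarith
  set t : ℝ := (Kr - 1) / (A / B - 1) with ht
  have ht0 : 0 < t := div_pos (by linarith) hd0
  have ht1 : 1 < t := by
    rw [ht, lt_div_iff₀ hd0]
    have : A / B < Kr := (div_lt_iff₀ hB).2 hKB
    linarith
  set c : ℝ := t ^ (1/γ) with hc
  have hc0 : 0 < c := Real.rpow_pos_of_pos ht0 _
  have hc1 : 1 < c := by
    rw [hc]
    exact (Real.one_lt_rpow_iff_of_pos ht0).2 (Or.inl ⟨ht1, by positivity⟩)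
  have hcγ : c ^ γ = t := by
    rw [hc, ← Real.rpow_mul ht0.le, one_div_mul_cancel (ne_of_gt hγ0), Real.rpow_one]
  have hden : 0 < c + Kr - 1 := by linarith
  set ρs : ℝ := Kr / (c + Kr - 1) with hρs
  have hρ0 : 0 < ρs := div_pos (by linarith) hden
  have hρ1 : ρs < 1 := by
    rw [hρs, div_lt_one hden]; linarith
  have hqρ : (1 - Kr) * ρs + Kr = c * ρs := by
    rw [hρs]; field_simp; ring
  clear_value t c ρs
  -- the key first-order condition
  have key : (A - B) * ρs ^ (-γ) = B * (Kr - 1) * (c * ρs) ^ (-γ) := by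
    rw [Real.mul_rpow hc0.le hρ0.le]
    have hcneg : c ^ (-γ) = (A/B - 1)/(Kr - 1) := by
      rw [Real.rpow_neg hc0.le, hcγ, ht, inv_div]
    have hfac : B * (Kr - 1) * ((A / B - 1) / (Kr - 1)) = A - B := by
      have hKr1 : Kr - 1 ≠ 0 := by linarith
      field_simp
    rw [hcneg, ← mul_assoc, hfac]
  refine ⟨⟨hρ0, hρ1⟩, by rw [hqρ]; linear_combination (1 - γ) * key, ?_⟩
  -- derivative of f
  set F : ℝ → ℝ := fun x => A * x ^ (1-γ) + B * (((1-Kr)*x+Kr)^(1-γ) - x^(1-γ)) with hF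
  set d : ℝ → ℝ := fun x => (1-γ)*(A-B)*x^(-γ) - (1-γ)*B*(Kr-1)*((1-Kr)*x+Kr)^(-γ) with hd
  have hq : ∀ x : ℝ, 0 < x → x ≤ 1 → 0 < (1-Kr)*x + Kr := by
    intro x hx hx1
    nlinarith
  have hasD : ∀ x : ℝ, 0 < x → x ≤ 1 → HasDerivAt F (d x) x := by
    intro x hx hx1
    have h1 : HasDerivAt (fun y : ℝ => y ^ (1-γ)) ((1-γ) * x ^ (1-γ-1)) x :=
      Real.hasDerivAt_rpow_const (Or.inl hx.ne')
    have h2 : HasDerivAt (fun y : ℝ => (1-Kr)*y + Kr) (1-Kr) x := by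
      simpa using ((hasDerivAt_id x).const_mul (1-Kr)).add_const Kr
    have h3 : HasDerivAt (fun y : ℝ => ((1-Kr)*y+Kr) ^ (1-γ))
        ((1-Kr) * (1-γ) * ((1-Kr)*x+Kr) ^ (1-γ-1)) x :=
      h2.rpow_const (Or.inl (ne_of_gt (hq x hx hx1)))
    have := ((h1.const_mul A).add (((h3.sub h1)).const_mul B))
    have he : (1:ℝ)-γ-1 = -γ := by ring
    rw [he] at this
    refine this.congr_deriv ?_
    rw [hd]; ring
  have hderiv : ∀ x : ℝ, 0 < x → x ≤ 1 → deriv F x = d x := fun x hx hx1 =>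
    (hasD x hx hx1).deriv
  -- sign of d
  have hsign : ∀ x : ℝ, 0 < x → x ≤ 1 →
      (x < ρs → 0 < d x) ∧ (ρs < x → d x < 0) := by
    intro x hx hx1
    have hqx := hq x hx hx1
    have hxγ : 0 < x ^ γ := Real.rpow_pos_of_pos hx _
    have hqγ : 0 < ((1-Kr)*x+Kr) ^ γ := Real.rpow_pos_of_pos hqx _
    have hrw : ∀ u : ℝ, 0 < u → u ^ (-γ) = (u ^ γ)⁻¹ := fun u hu => by
      rw [Real.rpow_neg hu.le]
    have hBA' : A - B = B * (A/B - 1) := by field_simp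
    have htB : B * (Kr - 1) = (A - B) * t := by
      rw [ht, hBA']; field_simp
    constructor
    · intro hlt
      have hcx : c * x < (1-Kr)*x + Kr := by
        have : (c + Kr - 1) * x < Kr := by
          rw [hρs] at hlt
          calc (c + Kr - 1) * x < (c + Kr - 1) * (Kr / (c + Kr - 1)) := by
                exact mul_lt_mul_of_pos_left hlt hden
            _ = Kr := by field_simp
        nlinarith
      have h4 : (c*x) ^ γ < ((1-Kr)*x+Kr) ^ γ :=
        Real.rpow_lt_rpow (by positivity) hcx hγ0
      rw [Real.mul_rpow hc0.le hx.le, hcγ] at h4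
      -- t * x^γ < q^γ
      simp only [hd]
      have e1 : x ^ (-γ) = (x ^ γ)⁻¹ := hrw x hx
      have e2 : ((1-Kr)*x+Kr) ^ (-γ) = (((1-Kr)*x+Kr) ^ γ)⁻¹ := hrw _ hqx
      rw [e1, e2]
      rw [sub_pos]
      have e3 : (1-γ)*B*(Kr-1) * (((1-Kr)*x+Kr) ^ γ)⁻¹
          = (1-γ)*(A-B)*t * (((1-Kr)*x+Kr) ^ γ)⁻¹ := by
        linear_combination ((1-γ) * (((1-Kr)*x+Kr) ^ γ)⁻¹) * htB
      rw [e3]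
      exact aux1 _ _ _ _ (mul_pos hγ' hAB) hxγ hqγ h4
    · intro hlt
      have hcx : (1-Kr)*x + Kr < c * x := by
        have : Kr < (c + Kr - 1) * x := by
          rw [hρs] at hlt
          calc Kr = (c + Kr - 1) * (Kr / (c + Kr - 1)) := by field_simp
            _ < (c + Kr - 1) * x := mul_lt_mul_of_pos_left hlt hden
        nlinarith
      have h4 : ((1-Kr)*x+Kr) ^ γ < (c*x) ^ γ :=
        Real.rpow_lt_rpow hqx.le hcx hγ0
      rw [Real.mul_rpow hc0.le hx.le, hcγ] at h4
      simp only [hd]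
      have e1 : x ^ (-γ) = (x ^ γ)⁻¹ := hrw x hx
      have e2 : ((1-Kr)*x+Kr) ^ (-γ) = (((1-Kr)*x+Kr) ^ γ)⁻¹ := hrw _ hqx
      rw [e1, e2]
      rw [sub_neg]
      have e3 : (1-γ)*B*(Kr-1) * (((1-Kr)*x+Kr) ^ γ)⁻¹
          = (1-γ)*(A-B)*t * (((1-Kr)*x+Kr) ^ γ)⁻¹ := by
        linear_combination ((1-γ) * (((1-Kr)*x+Kr) ^ γ)⁻¹) * htB
      rw [e3]
      exact aux2 _ _ _ _ (mul_pos hγ' hAB) hxγ hqγ h4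
  -- maximality
  intro x hx
  obtain ⟨hx0, hx1⟩ := hx
  show F x ≤ F ρs
  rcases lt_trichotomy x ρs with hlt | heq | hgt
  · have hmono : StrictMonoOn F (Icc x ρs) := by
      apply strictMonoOn_of_deriv_pos (convex_Icc x ρs)
      · intro y hy
        exact (hasD y (lt_of_lt_of_le hx0 hy.1) (le_trans hy.2 hρ1.le)).continuousAt.continuousWithinAt
      · intro y hy
        rw [interior_Icc] at hy
        have hy0 : 0 < y := lt_trans hx0 hy.1
        have hy1 : y ≤ 1 := le_trans hy.2.le hρ1.le
        rw [hderiv y hy0 hy1]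
        exact ((hsign y hy0 hy1).1 hy.2)
    exact (hmono (left_mem_Icc.2 hlt.le) (right_mem_Icc.2 hlt.le) hlt).le
  · rw [heq]
  · have hanti : StrictAntiOn F (Icc ρs x) := by
      apply strictAntiOn_of_deriv_neg (convex_Icc ρs x)
      · intro y hy
        exact (hasD y (lt_of_lt_of_le hρ0 hy.1) (le_trans hy.2 hx1)).continuousAt.continuousWithinAt
      · intro y hy
        rw [interior_Icc] at hy
        have hy0 : 0 < y := lt_trans hρ0 hy.1
        have hy1 : y ≤ 1 := le_trans hy.2.le hx1
        rw [hderiv y hy0 hy1]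
        exact ((hsign y hy0 hy1).2 hy.1)
    exact (hanti (left_mem_Icc.2 hgt.le) (right_mem_Icc.2 hgt.le) hgt).le
end
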